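/- Fix l > −1 and real numbers σ ∈ (0, 1/(3+2l)) and σ'. For (U,V) ∈ (0,1)² define D(U,V) := [2(2+l)σ' − 1 − (7+4l)σ]·[V(1−U) + σUV] + U·[2(1+l)(1−V) + 2(3+2l)Vσ(1+σ)]. Then D(U,V) > 0 for all (U,V) ∈ (0,1)² if and only if σ' ≥ 1/(4+2l) + ((7+4l)/(4+2l))·σ. Moreover, along any C¹ solution of the system dU/dλ = U(1−U)[(3+2l−(4+2l)U)(1−V) − (1+σ−σ')H], dV/dλ = V(1−V)[(2U−1)(1−V+2σV) + σ'H], H = (1−U+σU)V (with these fixed values of σ, σ'), the function Z = [U/(1−U)]·[V/(1−V)]^{3+2l} satisfies Z^{−1}·dZ/dλ = D(U,V) at every point where (U,V) ∈ (0,1)². -/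

import Mathlib

open Set

/-- For fixed `l > -1`, `σ ∈ (0,1/(3+2l))` and `σ'`, define
`D(U,V) = [2(2+l)σ' - 1 - (7+4l)σ][V(1-U) + σUV] + U[2(1+l)(1-V) + 2(3+2l)Vσ(1+σ)]`.
Then `D > 0` on `(0,1)²` iff `σ' ≥ 1/(4+2l) + ((7+4l)/(4+2l))σ`; moreover along any
`C¹` solution of the compactified system, `Z = [U/(1-U)][V/(1-V)]^{3+2l}` satisfies
`dZ/dλ = Z · D(U,V)` wherever `(U,V) ∈ (0,1)²`. -/
theorem stmt9
    (l : ℝ) (hl : -1 < l)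
    (σ σ' : ℝ) (hσpos : 0 < σ) (hσlt : σ < 1 / (3 + 2 * l)) :
    ((∀ U V : ℝ, U ∈ Ioo (0:ℝ) 1 → V ∈ Ioo (0:ℝ) 1 →
        0 < (2 * (2 + l) * σ' - 1 - (7 + 4 * l) * σ) * (V * (1 - U) + σ * U * V) +
            U * (2 * (1 + l) * (1 - V) + 2 * (3 + 2 * l) * V * σ * (1 + σ)))
      ↔ 1 / (4 + 2 * l) + (7 + 4 * l) / (4 + 2 * l) * σ ≤ σ') ∧
    (∀ U V : ℝ → ℝ,
      (∀ t : ℝ, HasDerivAt U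
        (U t * (1 - U t) * ((3 + 2 * l - (4 + 2 * l) * U t) * (1 - V t)
          - (1 + σ - σ') * ((1 - U t + σ * U t) * V t))) t) →
      (∀ t : ℝ, HasDerivAt V
        (V t * (1 - V t) * ((2 * U t - 1) * (1 - V t + 2 * σ * V t)
          + σ' * ((1 - U t + σ * U t) * V t))) t) →
      ∀ t : ℝ, U t ∈ Ioo (0:ℝ) 1 → V t ∈ Ioo (0:ℝ) 1 →
        HasDerivAt (fun s => (U s / (1 - U s)) * (V s / (1 - V s)) ^ (3 + 2 * l))
          ((U t / (1 - U t)) * (V t / (1 - V t)) ^ (3 + 2 * l) *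
            ((2 * (2 + l) * σ' - 1 - (7 + 4 * l) * σ) * (V t * (1 - U t) + σ * U t * V t) +
              U t * (2 * (1 + l) * (1 - V t) + 2 * (3 + 2 * l) * V t * σ * (1 + σ)))) t) := by
  have h42 : (0:ℝ) < 4 + 2 * l := by linarith
  have hthr : 1 / (4 + 2 * l) + (7 + 4 * l) / (4 + 2 * l) * σ
      = (1 + (7 + 4 * l) * σ) / (4 + 2 * l) := by
    field_simp
  constructor
  · constructor
    · -- D > 0 on square → σ' ≥ threshold
      intro h
      rw [hthr]
      by_contra hc
      push_neg at hc
      have hB : σ' * (4 + 2 * l) < 1 + (7 + 4 * l) * σ := (lt_div_iff₀ h42).mp hc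
      set A : ℝ := 2 * (2 + l) * σ' - 1 - (7 + 4 * l) * σ with hA
      have hAneg : A < 0 := by rw [hA]; linarith
      set B : ℝ := -A with hBdef
      have hBpos : 0 < B := by simp [hBdef]; linarith
      set C : ℝ := A * (σ - 1) / 2 + (1 + l) + (3 + 2 * l) * σ * (1 + σ) with hC
      set M : ℝ := max C 1 with hM
      have hM1 : (1:ℝ) ≤ M := le_max_right _ _
      have hMC : C ≤ M := le_max_left _ _
      have hMpos : (0:ℝ) < M := by linarith
      set U0 : ℝ := min (1/2) (B / (4 * M)) with hU0
      have hU0pos : 0 < U0 := lt_min (by norm_num) (by positivity)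
      have hU0half : U0 ≤ 1/2 := min_le_left _ _
      have hU0BM : U0 ≤ B / (4 * M) := min_le_right _ _
      clear_value A B C M U0
      have hkey := h U0 (1/2) ⟨hU0pos, by linarith⟩ ⟨by norm_num, by norm_num⟩
      have heq : A * ((1:ℝ)/2 * (1 - U0) + σ * U0 * (1/2)) +
          U0 * (2 * (1 + l) * (1 - 1/2) + 2 * (3 + 2 * l) * (1/2) * σ * (1 + σ))
          = A / 2 + U0 * C := by rw [hC]; ring
      have hUC : U0 * C ≤ B / 4 := by
        rcases le_or_gt C 0 with hC0 | hC0
        · have : U0 * C ≤ 0 := mul_nonpos_of_nonneg_of_nonpos hU0pos.le hC0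
          nlinarith [hBpos, this]
        · have h1 : U0 * C ≤ (B / (4 * M)) * C :=
            mul_le_mul_of_nonneg_right hU0BM hC0.le
          have h2 : (B / (4 * M)) * C ≤ (B / (4 * M)) * M :=
            mul_le_mul_of_nonneg_left hMC (by positivity)
          have h3 : (B / (4 * M)) * M = B / 4 := by field_simp
          linarith
      have : A / 2 + U0 * C < 0 := by
        have : A / 2 = -(B / 2) := by rw [hBdef]; ring
        rw [this]; linarith
      rw [heq] at hkey
      linarith
    · -- σ' ≥ threshold → D > 0 on square
      intro hA' U V hU hV
      rw [hthr] at hA'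
      have hA : 0 ≤ 2 * (2 + l) * σ' - 1 - (7 + 4 * l) * σ := by
        have := (div_le_iff₀ h42).mp hA'
        linarith
      obtain ⟨hU0, hU1⟩ := hU
      obtain ⟨hV0, hV1⟩ := hV
      have t1 : 0 < V * (1 - U) + σ * U * V := by
        have := mul_pos hV0 (by linarith : (0:ℝ) < 1 - U)
        have := mul_pos (mul_pos hσpos hU0) hV0
        nlinarith
      have t2 : 0 < 2 * (1 + l) * (1 - V) + 2 * (3 + 2 * l) * V * σ * (1 + σ) := by
        have := mul_pos (by linarith : (0:ℝ) < 2 * (1 + l)) (by linarith : (0:ℝ) < 1 - V)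
        have := mul_pos (mul_pos (mul_pos (by linarith : (0:ℝ) < 2 * (3 + 2 * l)) hV0) hσpos)
          (by linarith : (0:ℝ) < 1 + σ)
        nlinarith
      have := mul_nonneg hA t1.le
      have := mul_pos hU0 t2
      linarith
  · -- the derivative computation
    intro U V hU hV t hUt hVt
    obtain ⟨hu0, hu1⟩ := hUt
    obtain ⟨hv0, hv1⟩ := hVt
    have h1u : (1:ℝ) - U t ≠ 0 := by linarith
    have h1v : (1:ℝ) - V t ≠ 0 := by linarith
    have hgpos : 0 < V t / (1 - V t) := div_pos hv0 (by linarith)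
    have hf : HasDerivAt (fun s => U s / (1 - U s))
        ((U t * (1 - U t) * ((3 + 2 * l - (4 + 2 * l) * U t) * (1 - V t)
          - (1 + σ - σ') * ((1 - U t + σ * U t) * V t)) * (1 - U t)
          - U t * (0 - U t * (1 - U t) * ((3 + 2 * l - (4 + 2 * l) * U t) * (1 - V t)
          - (1 + σ - σ') * ((1 - U t + σ * U t) * V t)))) / (1 - U t) ^ 2) t :=
      (hU t).div ((hasDerivAt_const t (1:ℝ)).sub (hU t)) h1u
    have hg : HasDerivAt (fun s => V s / (1 - V s))
        ((V t * (1 - V t) * ((2 * U t - 1) * (1 - V t + 2 * σ * V t)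
          + σ' * ((1 - U t + σ * U t) * V t)) * (1 - V t)
          - V t * (0 - V t * (1 - V t) * ((2 * U t - 1) * (1 - V t + 2 * σ * V t)
          + σ' * ((1 - U t + σ * U t) * V t)))) / (1 - V t) ^ 2) t :=
      (hV t).div ((hasDerivAt_const t (1:ℝ)).sub (hV t)) h1v
    have hG := hg.rpow_const (p := 3 + 2 * l) (Or.inl (ne_of_gt hgpos))
    have hZ := hf.mul hG
    refine hZ.congr_deriv ?_
    have hsub : (V t / (1 - V t)) ^ (3 + 2 * l - 1)
        = (V t / (1 - V t)) ^ (3 + 2 * l) / (V t / (1 - V t)) := by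
      rw [Real.rpow_sub hgpos, Real.rpow_one]
    rw [hsub]
    have hGpos : 0 < (V t / (1 - V t)) ^ (3 + 2 * l) := Real.rpow_pos_of_pos hgpos _
    field_simp
    ring
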